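/- Let U = [A;B] be an invertible n×n matrix over a field F with A of size r×n and B of size (n−r)×n, where 2r > n, and let U⁻¹ = (C | D) with C of size n×r and D of size n×(n−r). Set t = 2r − n, let B₁ be the r×n matrix obtained by stacking the t×n zero matrix on top of B, and write C = (X | C₁) where C₁ consists of the last n−r columns of C. Suppose i ∈ F satisfies i² = −1. Then over F[z]: (A + iB₁z)·(iD + C₁z) = 0, so iD + C₁z is a control matrix of the memory-1 convolutional code generated by G(z) = A + iB₁z, and (A + iB₁z)·C = I_r, so the code is non-catastrophic. -/

import Mathlib

/-- Let `U = [A; B]` be an invertible `n × n` matrix with `A` of size `r × n`,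
`B` of size `(n-r) × n`, `2r > n`, and `U⁻¹ = (C | D)`.  With `t = 2r - n`,
`B₁ = [0_{t×n}; B]`, `C₁` the last `n - r` columns of `C`, and `i ∈ F` with
`i² = -1`, over `F[z]`:
`(A + iB₁z) * (iD + C₁z) = 0`, so `iD + C₁z` is a control matrix of the
memory-1 convolutional code generated by `G(z) = A + iB₁z`, and
`(A + iB₁z) * C = I_r`, so the code is non-catastrophic. -/
theorem stmt_18 {F : Type*} [Field F] {n r : ℕ}
    (hrn : r ≤ n) (h2r : n < 2 * r)
    (A : Matrix (Fin r) (Fin n) F) (B : Matrix (Fin (n - r)) (Fin n) F)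
    (C : Matrix (Fin n) (Fin r) F) (D : Matrix (Fin n) (Fin (n - r)) F)
    (hUV : Matrix.fromRows A B * Matrix.fromCols C D = 1)
    (hVU : Matrix.fromCols C D * Matrix.fromRows A B = 1)
    (B₁ : Matrix (Fin r) (Fin n) F)
    (hB₁ : ∀ (i : Fin r) (j : Fin n), B₁ i j =
      if h : (i : ℕ) < 2 * r - n then 0
      else B ⟨(i : ℕ) - (2 * r - n), by have := i.isLt; omega⟩ j)
    (C₁ : Matrix (Fin n) (Fin (n - r)) F)
    (hC₁ : ∀ (i : Fin n) (j : Fin (n - r)), C₁ i j =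
      C i ⟨2 * r - n + (j : ℕ), by have := j.isLt; omega⟩)
    (i : F) (hi : i ^ 2 = -1) :
    (A.map Polynomial.C +
        (Polynomial.X : Polynomial F) • (i • B₁).map Polynomial.C) *
      ((i • D).map Polynomial.C +
        (Polynomial.X : Polynomial F) • C₁.map Polynomial.C) = 0 ∧
    (A.map Polynomial.C +
        (Polynomial.X : Polynomial F) • (i • B₁).map Polynomial.C) *
      C.map Polynomial.C = 1 := by
  rw [Matrix.fromRows_mul_fromCols, ← Matrix.fromBlocks_one] at hUV
  have hAC : A * C = 1 := by
    have := congrArg Matrix.toBlocks₁₁ hUV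
    simpa only [Matrix.toBlocks_fromBlocks₁₁] using this
  have hAD : A * D = 0 := by
    have := congrArg Matrix.toBlocks₁₂ hUV
    simpa only [Matrix.toBlocks_fromBlocks₁₂] using this
  have hBC : B * C = 0 := by
    have := congrArg Matrix.toBlocks₂₁ hUV
    simpa only [Matrix.toBlocks_fromBlocks₂₁] using this
  have hBD : B * D = 1 := by
    have := congrArg Matrix.toBlocks₂₂ hUV
    simpa only [Matrix.toBlocks_fromBlocks₂₂] using this
  -- B₁ * C = 0
  have hB₁C : B₁ * C = 0 := by
    ext k j
    rw [Matrix.mul_apply, Matrix.zero_apply]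
    rcases lt_or_ge (k : ℕ) (2 * r - n) with hk | hk
    · apply Finset.sum_eq_zero
      intro m _
      rw [hB₁, dif_pos hk, zero_mul]
    · have hk' : (k : ℕ) - (2 * r - n) < n - r := by have := k.isLt; omega
      have : ∑ m, B₁ k m * C m j = (B * C) ⟨(k : ℕ) - (2 * r - n), hk'⟩ j := by
        rw [Matrix.mul_apply]
        refine Finset.sum_congr rfl fun m _ => ?_
        rw [hB₁, dif_neg (by omega)]
      rw [this, hBC, Matrix.zero_apply]
  -- B₁ * C₁ = 0
  have hB₁C₁ : B₁ * C₁ = 0 := by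
    ext k j
    rw [Matrix.mul_apply, Matrix.zero_apply]
    rcases lt_or_ge (k : ℕ) (2 * r - n) with hk | hk
    · apply Finset.sum_eq_zero
      intro m _
      rw [hB₁, dif_pos hk, zero_mul]
    · have hk' : (k : ℕ) - (2 * r - n) < n - r := by have := k.isLt; omega
      have hj' : 2 * r - n + (j : ℕ) < r := by have := j.isLt; omega
      have : ∑ m, B₁ k m * C₁ m j
          = (B * C) ⟨(k : ℕ) - (2 * r - n), hk'⟩ ⟨2 * r - n + (j : ℕ), hj'⟩ := by
        rw [Matrix.mul_apply]
        refine Finset.sum_congr rfl fun m _ => ?_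
        rw [hB₁, dif_neg (by omega), hC₁]
      rw [this, hBC, Matrix.zero_apply]
  -- A * C₁ = B₁ * D
  have hkey : A * C₁ = B₁ * D := by
    ext k j
    have hj' : 2 * r - n + (j : ℕ) < r := by have := j.isLt; omega
    have hL : (A * C₁) k j = (A * C) k ⟨2 * r - n + (j : ℕ), hj'⟩ := by
      rw [Matrix.mul_apply, Matrix.mul_apply]
      refine Finset.sum_congr rfl fun m _ => ?_
      rw [hC₁]
    rw [hL, hAC, Matrix.one_apply]
    rcases lt_or_ge (k : ℕ) (2 * r - n) with hk | hk
    · have : (B₁ * D) k j = 0 := by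
        rw [Matrix.mul_apply]
        apply Finset.sum_eq_zero
        intro m _
        rw [hB₁, dif_pos hk, zero_mul]
      rw [this, if_neg]
      intro h
      have := congrArg (Fin.val) h
      simp at this
      omega
    · have hk' : (k : ℕ) - (2 * r - n) < n - r := by have := k.isLt; omega
      have : (B₁ * D) k j = (B * D) ⟨(k : ℕ) - (2 * r - n), hk'⟩ j := by
        rw [Matrix.mul_apply, Matrix.mul_apply]
        refine Finset.sum_congr rfl fun m _ => ?_
        rw [hB₁, dif_neg (by omega)]
      rw [this, hBD, Matrix.one_apply]
      by_cases h : k = (⟨2 * r - n + (j : ℕ), hj'⟩ : Fin r)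
      · rw [if_pos h, if_pos]
        have := congrArg (Fin.val) h
        simp at this
        ext
        simp
        omega
      · rw [if_neg h, if_neg]
        intro h'
        apply h
        have := congrArg (Fin.val) h'
        simp at this
        ext
        simp
        omega
  have hii : i * i = -1 := by rw [← sq]; exact hi
  constructor
  · rw [Matrix.mul_add, Matrix.add_mul, Matrix.add_mul, Matrix.smul_mul, Matrix.smul_mul,
      Matrix.mul_smul, Matrix.mul_smul, smul_smul,
      ← Matrix.map_mul, ← Matrix.map_mul, ← Matrix.map_mul, ← Matrix.map_mul]
    have e1 : A * (i • D) = 0 := by rw [Matrix.mul_smul, hAD, smul_zero]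
    have e2 : (i • B₁) * (i • D) = -(B₁ * D) := by
      rw [Matrix.smul_mul, Matrix.mul_smul, smul_smul, hii, neg_smul, one_smul]
    have e3 : (i • B₁) * C₁ = 0 := by rw [Matrix.smul_mul, hB₁C₁, smul_zero]
    rw [e1, e2, e3, hkey]
    have hneg : (-(B₁ * D)).map (Polynomial.C : F → Polynomial F)
        = -((B₁ * D).map Polynomial.C) := by
      ext k j
      simp only [Matrix.map_apply, Matrix.neg_apply, map_neg]
    rw [hneg]
    simp only [Matrix.map_zero _ (map_zero (Polynomial.C : F →+* Polynomial F)),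
      smul_zero, smul_neg, zero_add, add_zero, add_neg_cancel, neg_add_cancel]
  · rw [Matrix.add_mul, Matrix.smul_mul, ← Matrix.map_mul, ← Matrix.map_mul, hAC]
    have : (i • B₁) * C = 0 := by rw [Matrix.smul_mul, hB₁C, smul_zero]
    rw [this, Matrix.map_zero _ (map_zero _), smul_zero, add_zero,
      Matrix.map_one _ (map_zero _) (map_one _)]
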